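/- For all n ≥ 4, A_n is contained in the set P · Σ² · S, where P is the set of prefixes of length f_{n-1} − 1 of elements of A_{n-1}, Σ² is the set of all binary words of length 2, and S is the set of suffixes of length f_{n-2} − 1 of elements of A_{n-2}. -/

import Mathlib

/-- Sets of inflated random Fibonacci words: A₁ = {0}, A₂ = {1},
    Aₙ = Aₙ₋₁Aₙ₋₂ ∪ Aₙ₋₂Aₙ₋₁ for n ≥ 3 (A₀ = ∅). -/
def wordSet : ℕ → Set (List Bool)
  | 0 => ∅
  | 1 => {[false]}
  | 2 => {[true]}
  | (n + 3) => Set.image2 (· ++ ·) (wordSet (n + 2)) (wordSet (n + 1)) ∪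
      Set.image2 (· ++ ·) (wordSet (n + 1)) (wordSet (n + 2))

/-- Concatenation of sets of words: UV = {uv : u ∈ U, v ∈ V}. -/
def cat (U V : Set (List Bool)) : Set (List Bool) := Set.image2 (· ++ ·) U V

/-- W[a,b]: the set of segments wₐ…w_b (1-based indexing) of words in W. -/
def seg (W : Set (List Bool)) (a b : ℕ) : Set (List Bool) :=
  (fun w => (w.drop (a - 1)).take (b - a + 1)) '' W

/-- F(S, m): the set of all contiguous factors of length m of words in S. -/
def factorSet (S : Set (List Bool)) (m : ℕ) : Set (List Bool) :=
  {x | x.length = m ∧ ∃ w ∈ S, x <:+: w}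

/-- Fₙ: the set of factors of length fₙ occurring in any inflated word. -/
def Fn (n : ℕ) : Set (List Bool) := ⋃ m ≥ 1, factorSet (wordSet m) (Nat.fib n)

lemma wordSet_length : ∀ k, ∀ w ∈ wordSet k, w.length = Nat.fib k := by
  intro k
  induction k using Nat.strong_induction_on with
  | _ k ih =>
    match k with
    | 0 => intro w hw; exact absurd hw (by simp [wordSet])
    | 1 => intro w hw; simp only [wordSet, Set.mem_singleton_iff] at hw; subst hw; simp
    | 2 => intro w hw; simp only [wordSet, Set.mem_singleton_iff] at hw; subst hw; simp
    | (j + 3) =>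
      intro w hw
      have hf3 : Nat.fib (j + 3) = Nat.fib (j + 1) + Nat.fib (j + 2) := Nat.fib_add_two
      rcases hw with ⟨a, ha, b, hb, rfl⟩ | ⟨a, ha, b, hb, rfl⟩
      · have h1 := ih (j + 2) (by omega) a ha
        have h2 := ih (j + 1) (by omega) b hb
        simp only [List.length_append, h1, h2]
        omega
      · have h1 := ih (j + 1) (by omega) a ha
        have h2 := ih (j + 2) (by omega) b hb
        simp only [List.length_append, h1, h2]
        omega

lemma wordSet_nonempty : ∀ k, (wordSet (k + 1)).Nonempty := by
  intro k
  induction k using Nat.strong_induction_on with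
  | _ k ih =>
    match k with
    | 0 => exact ⟨[false], rfl⟩
    | 1 => exact ⟨[true], rfl⟩
    | (j + 2) =>
      obtain ⟨a, ha⟩ := ih (j + 1) (by omega)
      obtain ⟨b, hb⟩ := ih j (by omega)
      exact ⟨a ++ b, Or.inl ⟨a, ha, b, hb, rfl⟩⟩

/-- Prefix lemma: a prefix of length at most f_{k+1} - 1 of a word in A_{k+2}
    agrees with a prefix of some word in A_{k+1}. -/
lemma takeP : ∀ k, ∀ v ∈ wordSet (k + 2), ∀ m, m ≤ Nat.fib (k + 1) - 1 →
    ∃ a ∈ wordSet (k + 1), v.take m = a.take m := by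
  intro k
  induction k using Nat.strong_induction_on with
  | _ k ih =>
    match k with
    | 0 =>
      intro v hv m hm
      have hm0 : m = 0 := by simpa using hm
      exact ⟨[false], rfl, by simp [hm0]⟩
    | 1 =>
      intro v hv m hm
      have hm0 : m = 0 := by simpa using hm
      exact ⟨[true], rfl, by simp [hm0]⟩
    | (j + 2) =>
      intro v hv m hm
      replace hv : v ∈ Set.image2 (· ++ ·) (wordSet (j + 3)) (wordSet (j + 2)) ∪
          Set.image2 (· ++ ·) (wordSet (j + 2)) (wordSet (j + 3)) := hv
      replace hm : m ≤ Nat.fib (j + 3) - 1 := hm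
      have hf3 : Nat.fib (j + 3) = Nat.fib (j + 1) + Nat.fib (j + 2) := Nat.fib_add_two
      have hf2 : Nat.fib (j + 2) = Nat.fib j + Nat.fib (j + 1) := Nat.fib_add_two
      have hp1 : 0 < Nat.fib (j + 1) := Nat.fib_pos.mpr (by omega)
      have hee : Nat.fib (j + 1 + 1) = Nat.fib (j + 2) := rfl
      rcases hv with ⟨a, ha, b, hb, rfl⟩ | ⟨b, hb, a, ha, rfl⟩
      · -- v = a ++ b, a ∈ A_{j+3}
        have hal := wordSet_length _ a ha
        exact ⟨a, ha, List.take_append_of_le_length (by omega)⟩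
      · -- v = b ++ a, b ∈ A_{j+2}, a ∈ A_{j+3}
        have hbl := wordSet_length _ b hb
        by_cases hc : m ≤ Nat.fib (j + 2)
        · obtain ⟨c, hcw⟩ := wordSet_nonempty j
          refine ⟨b ++ c, Or.inl ⟨b, hb, c, hcw, rfl⟩, ?_⟩
          rw [List.take_append_of_le_length (by omega),
            List.take_append_of_le_length (by omega)]
        · push_neg at hc
          obtain ⟨a', ha', heq⟩ := ih (j + 1) (by omega) a ha (m - Nat.fib (j + 2))
            (by omega)
          obtain ⟨c, hcw, heq2⟩ := ih j (by omega) a' ha' (m - Nat.fib (j + 2))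
            (by omega)
          refine ⟨b ++ c, Or.inl ⟨b, hb, c, hcw, rfl⟩, ?_⟩
          have h1 : m = b.length + (m - Nat.fib (j + 2)) := by omega
          rw [h1, List.take_length_add_append, List.take_length_add_append, heq, heq2]

/-- Suffix lemma: a suffix of length at most f_{k+1} - 1 of a word in A_{k+2}
    agrees with a suffix of some word in A_{k+1}. -/
lemma dropS : ∀ k, ∀ v ∈ wordSet (k + 2), ∀ m, m ≤ Nat.fib (k + 1) - 1 →
    ∃ a ∈ wordSet (k + 1), v.drop (v.length - m) = a.drop (a.length - m) := by
  intro k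
  induction k using Nat.strong_induction_on with
  | _ k ih =>
    match k with
    | 0 =>
      intro v hv m hm
      have hm0 : m = 0 := by simpa using hm
      exact ⟨[false], rfl, by simp [hm0]⟩
    | 1 =>
      intro v hv m hm
      have hm0 : m = 0 := by simpa using hm
      exact ⟨[true], rfl, by simp [hm0]⟩
    | (j + 2) =>
      intro v hv m hm
      replace hv : v ∈ Set.image2 (· ++ ·) (wordSet (j + 3)) (wordSet (j + 2)) ∪
          Set.image2 (· ++ ·) (wordSet (j + 2)) (wordSet (j + 3)) := hv
      replace hm : m ≤ Nat.fib (j + 3) - 1 := hm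
      have hf3 : Nat.fib (j + 3) = Nat.fib (j + 1) + Nat.fib (j + 2) := Nat.fib_add_two
      have hf2 : Nat.fib (j + 2) = Nat.fib j + Nat.fib (j + 1) := Nat.fib_add_two
      have hp1 : 0 < Nat.fib (j + 1) := Nat.fib_pos.mpr (by omega)
      have hee : Nat.fib (j + 1 + 1) = Nat.fib (j + 2) := rfl
      rcases hv with ⟨a, ha, b, hb, rfl⟩ | ⟨b, hb, a, ha, rfl⟩
      · -- v = a ++ b, a ∈ A_{j+3}, b ∈ A_{j+2}
        have hal := wordSet_length _ a ha
        have hbl := wordSet_length _ b hb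
        by_cases hc : m ≤ Nat.fib (j + 2)
        · obtain ⟨c, hcw⟩ := wordSet_nonempty j
          refine ⟨c ++ b, Or.inr ⟨c, hcw, b, hb, rfl⟩, ?_⟩
          have hcl := wordSet_length _ c hcw
          have h1 : (a ++ b).length - m = a.length + (b.length - m) := by
            simp only [List.length_append]; omega
          have h2 : (c ++ b).length - m = c.length + (b.length - m) := by
            simp only [List.length_append]; omega
          rw [h1, h2, List.drop_length_add_append, List.drop_length_add_append]
        · push_neg at hc
          obtain ⟨a', ha', heq⟩ := ih (j + 1) (by omega) a ha (m - Nat.fib (j + 2))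
            (by omega)
          obtain ⟨c, hcw, heq2⟩ := ih j (by omega) a' ha' (m - Nat.fib (j + 2))
            (by omega)
          have hcl := wordSet_length _ c hcw
          have ha'l := wordSet_length _ a' ha'
          refine ⟨c ++ b, Or.inr ⟨c, hcw, b, hb, rfl⟩, ?_⟩
          have h1 : (a ++ b).length - m = a.length - (m - Nat.fib (j + 2)) := by
            simp only [List.length_append]; omega
          have h2 : (c ++ b).length - m = c.length - (m - Nat.fib (j + 2)) := by
            simp only [List.length_append]; omega
          rw [h1, h2, List.drop_append_of_le_length (by omega),
            List.drop_append_of_le_length (by omega), heq, heq2]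
      · -- v = b ++ a, b ∈ A_{j+2}, a ∈ A_{j+3} : suffix lands in a
        have hal := wordSet_length _ a ha
        refine ⟨a, ha, ?_⟩
        have h1 : (b ++ a).length - m = b.length + (a.length - m) := by
          simp only [List.length_append]; omega
        rw [h1, List.drop_length_add_append]

theorem stmt10 (n : ℕ) (hn : 4 ≤ n) :
    wordSet n ⊆
      cat (cat ((fun w : List Bool => w.take (Nat.fib (n - 1) - 1)) '' wordSet (n - 1))
          {l : List Bool | l.length = 2})
        ((fun w : List Bool => w.drop (w.length - (Nat.fib (n - 2) - 1))) '' wordSet (n - 2)) := by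
  obtain ⟨N, rfl⟩ : ∃ N, n = N + 4 := ⟨n - 4, by omega⟩
  intro w hw
  have e1 : N + 4 - 1 = N + 3 := by omega
  have e2 : N + 4 - 2 = N + 2 := by omega
  rw [e1, e2]
  replace hw : w ∈ Set.image2 (· ++ ·) (wordSet (N + 3)) (wordSet (N + 2)) ∪
      Set.image2 (· ++ ·) (wordSet (N + 2)) (wordSet (N + 3)) := hw
  have hf3 : Nat.fib (N + 3) = Nat.fib (N + 1) + Nat.fib (N + 2) := Nat.fib_add_two
  have hf2 : Nat.fib (N + 2) = Nat.fib N + Nat.fib (N + 1) := Nat.fib_add_two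
  have hp1 : 0 < Nat.fib (N + 1) := Nat.fib_pos.mpr (by omega)
  have hp2 : 0 < Nat.fib (N + 2) := Nat.fib_pos.mpr (by omega)
  have hee : Nat.fib (N + 1 + 1) = Nat.fib (N + 2) := rfl
  rcases hw with ⟨u, hu, v, hv, rfl⟩ | ⟨u, hu, v, hv, rfl⟩
  · -- Case 1: u ∈ A_{N+3}, v ∈ A_{N+2}
    have hul := wordSet_length _ u hu
    have hvl := wordSet_length _ v hv
    refine ⟨u.take (Nat.fib (N + 3) - 1) ++ (u.drop (Nat.fib (N + 3) - 1) ++ v.take 1),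
      ⟨u.take (Nat.fib (N + 3) - 1), ⟨u, hu, rfl⟩,
       u.drop (Nat.fib (N + 3) - 1) ++ v.take 1, ?_, rfl⟩,
      v.drop 1, ⟨v, hv, ?_⟩, ?_⟩
    · -- middle has length 2
      show (u.drop (Nat.fib (N + 3) - 1) ++ v.take 1).length = 2
      simp only [List.length_append, List.length_drop, List.length_take]
      omega
    · show v.drop (v.length - (Nat.fib (N + 2) - 1)) = v.drop 1
      congr 1
      omega
    · show u.take (Nat.fib (N + 3) - 1) ++ (u.drop (Nat.fib (N + 3) - 1) ++ v.take 1) ++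
          v.drop 1 = u ++ v
      simp only [List.append_assoc, List.take_append_drop]
      rw [← List.append_assoc, List.take_append_drop]
  · -- Case 2: u ∈ A_{N+2}, v ∈ A_{N+3}
    have hul := wordSet_length _ u hu
    have hvl := wordSet_length _ v hv
    obtain ⟨a', ha', heq⟩ := takeP (N + 1) v hv (Nat.fib (N + 1) - 1) (by omega)
    obtain ⟨c, hcw, heq2⟩ := takeP N a' ha' (Nat.fib (N + 1) - 1) (by omega)
    have hcl := wordSet_length _ c hcw
    obtain ⟨d, hd, heq3⟩ := dropS (N + 1) v hv (Nat.fib (N + 2) - 1) (by omega)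
    refine ⟨(u ++ v.take (Nat.fib (N + 1) - 1)) ++ (v.drop (Nat.fib (N + 1) - 1)).take 2,
      ⟨u ++ v.take (Nat.fib (N + 1) - 1), ⟨u ++ c, Or.inl ⟨u, hu, c, hcw, rfl⟩, ?_⟩,
       (v.drop (Nat.fib (N + 1) - 1)).take 2, ?_, rfl⟩,
      d.drop (d.length - (Nat.fib (N + 2) - 1)), ⟨d, hd, rfl⟩, ?_⟩
    · show (u ++ c).take (Nat.fib (N + 3) - 1) = u ++ v.take (Nat.fib (N + 1) - 1)
      have h1 : Nat.fib (N + 3) - 1 = u.length + (Nat.fib (N + 1) - 1) := by omega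
      rw [h1, List.take_length_add_append, heq, heq2]
    · show ((v.drop (Nat.fib (N + 1) - 1)).take 2).length = 2
      simp only [List.length_take, List.length_drop]
      omega
    · show (u ++ v.take (Nat.fib (N + 1) - 1)) ++ (v.drop (Nat.fib (N + 1) - 1)).take 2 ++
          d.drop (d.length - (Nat.fib (N + 2) - 1)) = u ++ v
      rw [← heq3]
      have h4 : v.length - (Nat.fib (N + 2) - 1) = (Nat.fib (N + 1) - 1) + 2 := by omega
      rw [h4, ← List.drop_drop]
      simp only [List.append_assoc, List.take_append_drop]
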